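/- Let n be a positive integer. For all permutations τ, σ of [n] one has #(τ) + #(τ⁻¹σ) + #(σ) ≤ n + 2·#(τ ∨ σ). -/

import Mathlib

/-- The permutation induced by `f` on the subset `B`: an element `b` is sent to the first
element of the sequence `f b, f (f b), f (f (f b)), ...` that lies in `B`
(and is left fixed if no iterate ever returns to `B`). -/
noncomputable def induced {α : Type*} (f : α → α) (B : Set α) (b : α) : α := by
  classical
  exact if h : ∃ k, 0 < k ∧ f^[k] b ∈ B then f^[Nat.find h] b else b

/-- `A` is an orbit of the permutation `τ`. -/
def IsOrbit {α : Type*} (τ : Equiv.Perm α) (A : Set α) : Prop :=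
  ∃ a, A = {b | τ.SameCycle a b}

/-- The number of orbits of `τ` (fixed points count as orbits). -/
noncomputable def numOrbits {α : Type*} (τ : Equiv.Perm α) : ℕ :=
  Set.ncard {A : Set α | IsOrbit τ A}

/-- `induced f S` acts on `a, b, c` as the 3-cycle `(a, b, c)`. -/
def MapsCyc3 {α : Type*} (f : α → α) (S : Set α) (a b c : α) : Prop :=
  induced f S a = b ∧ induced f S b = c ∧ induced f S c = a

/-- `induced f S` acts on `a, b, c, d` as the 4-cycle `(a, b, c, d)`. -/
def MapsCyc4 {α : Type*} (f : α → α) (S : Set α) (a b c d : α) : Prop :=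
  induced f S a = b ∧ induced f S b = c ∧ induced f S c = d ∧ induced f S d = a

/-- `induced f S` acts on `a, b, c, d` as the product of transpositions `(a, c)(b, d)`. -/
def MapsSwap2 {α : Type*} (f : α → α) (S : Set α) (a b c d : α) : Prop :=
  induced f S a = c ∧ induced f S c = a ∧ induced f S b = d ∧ induced f S d = b

/-- `induced f S` acts on `x, y` as the transposition `(x, y)`. -/
def MapsSwap {α : Type*} (f : α → α) (S : Set α) (x y : α) : Prop :=
  induced f S x = y ∧ induced f S y = x

/-- `σ` is standard with respect to the "forward cycle" `γ₀`, i.e. `σ∣B = γ₀∣B` for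
every orbit `B` of `σ`. -/
def DiscStandardRel {n : ℕ} (γ₀ σ : Equiv.Perm (Fin n)) : Prop :=
  ∀ A : Set (Fin n), IsOrbit σ A → ∀ b ∈ A, induced (⇑σ) A b = induced (⇑γ₀) A b

/-- The orbit partition of `σ` has no crossing: there are no `a < b < c < d` with
`a, c` in one orbit and `b, d` in a different orbit. -/
def OrbitsNoCrossing {n : ℕ} (σ : Equiv.Perm (Fin n)) : Prop :=
  ¬ ∃ a b c d : Fin n, a < b ∧ b < c ∧ c < d ∧
      σ.SameCycle a c ∧ σ.SameCycle b d ∧ ¬ σ.SameCycle a b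

/-- Disc non-crossing relative to a given forward cycle `γ₀`. -/
def DiscNCRel {n : ℕ} (γ₀ σ : Equiv.Perm (Fin n)) : Prop :=
  DiscStandardRel γ₀ σ ∧ OrbitsNoCrossing σ

/-- The set `S_disc-nc(n)` of disc non-crossing permutations of `[n]`
(here `[n] = {1, …, n}` is modelled by `Fin n`, and the forward cycle
`γ₀ = (1, 2, …, n)` is `finRotate n`). -/
def DiscNC {n : ℕ} (σ : Equiv.Perm (Fin n)) : Prop :=
  DiscNCRel (finRotate n) σ

/-- The external points `{1, …, p}` (0-indexed: values `< p`). -/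
def extSet (p q : ℕ) : Set (Fin (p + q)) := {i | (i : ℕ) < p}

/-- The internal points `{p+1, …, p+q}` (0-indexed: values `≥ p`). -/
def intSet (p q : ℕ) : Set (Fin (p + q)) := {i | p ≤ (i : ℕ)}

/-- `γ_ext = (1, 2, …, p)`, the forward cycle on the external points. -/
def gammaExt (p q : ℕ) : Equiv.Perm (Fin (p + q)) :=
  ((List.finRange (p + q)).take p).formPerm

/-- `γ_int = (p+1, p+2, …, p+q)`, the forward cycle on the internal points. -/
def gammaInt (p q : ℕ) : Equiv.Perm (Fin (p + q)) :=
  ((List.finRange (p + q)).drop p).formPerm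

/-- `γ = γ_ext · γ_int`. -/
def gammaAnn (p q : ℕ) : Equiv.Perm (Fin (p + q)) := gammaExt p q * gammaInt p q

/-- `λ_{x,y}`: the permutation fixing `x` and `y` and cycling the remaining points as
`(γ_ext(x), γ_ext²(x), …, γ_ext^{p-1}(x), γ_int(y), γ_int²(y), …, γ_int^{q-1}(y))`. -/
def lamPerm (p q : ℕ) (x y : Fin (p + q)) : Equiv.Perm (Fin (p + q)) :=
  (((List.range (p - 1)).map fun k => (gammaExt p q ^ (k + 1)) x) ++
    ((List.range (q - 1)).map fun k => (gammaInt p q ^ (k + 1)) y)).formPerm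

/-- `τ` is standard in `(p,q)`-annular sense. -/
def AnnStandard (p q : ℕ) (τ : Equiv.Perm (Fin (p + q))) : Prop :=
  (∀ A : Set (Fin (p + q)), IsOrbit τ A →
    (∀ b ∈ A ∩ extSet p q,
        induced (⇑τ) (A ∩ extSet p q) b = induced (⇑(gammaExt p q)) (A ∩ extSet p q) b) ∧
    (∀ b ∈ A ∩ intSet p q,
        induced (⇑τ) (A ∩ intSet p q) b = induced (⇑(gammaInt p q)) (A ∩ intSet p q) b)) ∧
  (∀ A : Set (Fin (p + q)), IsOrbit τ A →
    (A ∩ extSet p q).Nonempty → (A ∩ intSet p q).Nonempty →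
    (∃! a, a ∈ A ∩ extSet p q ∧ τ a ∈ intSet p q) ∧
    (∃! a, a ∈ A ∩ intSet p q ∧ τ a ∈ extSet p q))

/-- The annular crossing pattern (AC-1). -/
def AC1 (p q : ℕ) (τ : Equiv.Perm (Fin (p + q))) : Prop :=
  ∃ a b c d : Fin (p + q), List.Pairwise (· ≠ ·) [a, b, c, d] ∧
    MapsCyc4 (⇑(gammaAnn p q)) {a, b, c, d} a b c d ∧
    MapsSwap2 (⇑τ) {a, b, c, d} a b c d

/-- The annular crossing pattern (AC-2). -/
def AC2 (p q : ℕ) (τ : Equiv.Perm (Fin (p + q))) : Prop :=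
  ∃ a b c x y : Fin (p + q), List.Pairwise (· ≠ ·) [a, b, c, x, y] ∧
    x ∈ extSet p q ∧ y ∈ intSet p q ∧
    MapsCyc3 (⇑(lamPerm p q x y)) {a, b, c} a b c ∧
    MapsCyc3 (⇑τ) {a, b, c, x, y} a c b ∧
    MapsSwap (⇑τ) {a, b, c, x, y} x y

/-- The annular crossing pattern (AC-3). -/
def AC3 (p q : ℕ) (τ : Equiv.Perm (Fin (p + q))) : Prop :=
  ∃ a b c d x y : Fin (p + q), List.Pairwise (· ≠ ·) [a, b, c, d, x, y] ∧
    x ∈ extSet p q ∧ y ∈ intSet p q ∧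
    MapsCyc4 (⇑(lamPerm p q x y)) {a, b, c, d} a b c d ∧
    MapsSwap2 (⇑τ) {a, b, c, d, x, y} a b c d ∧
    MapsSwap (⇑τ) {a, b, c, d, x, y} x y

/-- The set `S_ann-nc(p,q)` of `(p,q)`-annular non-crossing permutations. -/
def AnnNC (p q : ℕ) (τ : Equiv.Perm (Fin (p + q))) : Prop :=
  AnnStandard p q τ ∧ ¬ AC1 p q τ ∧ ¬ AC2 p q τ ∧ ¬ AC3 p q τ

/-- A `(p,q)`-connecting set: meets both the external and internal points. -/
def ConnectingBlock (p q : ℕ) (B : Set (Fin (p + q))) : Prop :=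
  (B ∩ extSet p q).Nonempty ∧ (B ∩ intSet p q).Nonempty

/-- `τ` is `(p,q)`-connected: it has a `(p,q)`-connecting orbit. -/
def AnnConnected (p q : ℕ) (τ : Equiv.Perm (Fin (p + q))) : Prop :=
  ∃ A : Set (Fin (p + q)), IsOrbit τ A ∧ ConnectingBlock p q A

/-- A family of blocks has no crossing: no `a < b < c < d` with `a, c` in one block and
`b, d` in a different block. -/
def NoCrossing {n : ℕ} (ρ : Set (Set (Fin n))) : Prop :=
  ¬ ∃ (a b c d : Fin n) (B C : Set (Fin n)), B ∈ ρ ∧ C ∈ ρ ∧ B ≠ C ∧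
      a < b ∧ b < c ∧ c < d ∧ a ∈ B ∧ c ∈ B ∧ b ∈ C ∧ d ∈ C

/-- `b` lies in the orbit of `a` under the joint action of `τ` and `σ` (the action of the
subgroup generated by `τ` and `σ`). -/
def SameJointOrbit {α : Type*} (τ σ : Equiv.Perm α) (a b : α) : Prop :=
  ∃ g ∈ Subgroup.closure ({τ, σ} : Set (Equiv.Perm α)), g a = b

/-- `#(τ ∨ σ)`: the number of orbits of the joint action of `τ` and `σ`. -/
noncomputable def numJointOrbits {α : Type*} (τ σ : Equiv.Perm α) : ℕ :=
  Set.ncard {A : Set α | ∃ a, A = {b | SameJointOrbit τ σ a b}}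

section Aux

open Equiv Equiv.Perm

variable {α : Type*}

/-- Setoid of the same-cycle relation. -/
def cycSetoid (ρ : Equiv.Perm α) : Setoid α :=
  ⟨ρ.SameCycle, ⟨fun x => Equiv.Perm.SameCycle.refl ρ x,
    fun h => h.symm, fun h h' => h.trans h'⟩⟩

def jointSetoid (τ σ : Equiv.Perm α) : Setoid α where
  r := SameJointOrbit τ σ
  iseqv := by
    refine ⟨fun x => ⟨1, one_mem _, rfl⟩, ?_, ?_⟩
    · rintro x y ⟨g, hg, rfl⟩
      exact ⟨g⁻¹, inv_mem hg, g.symm_apply_apply x⟩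
    · rintro x y z ⟨g, hg, rfl⟩ ⟨h, hh, rfl⟩
      exact ⟨h * g, mul_mem hh hg, rfl⟩

/-- Merge the classes of `a` and `b`. -/
def joinPair (s : Setoid α) (a b : α) : Setoid α where
  r x y := s.r x y ∨ (s.r x a ∧ s.r b y) ∨ (s.r x b ∧ s.r a y)
  iseqv := by
    have tr : ∀ {x y z}, s.r x y → s.r y z → s.r x z := fun h h' => s.iseqv.trans h h'
    have sy : ∀ {x y}, s.r x y → s.r y x := fun h => s.iseqv.symm h
    refine ⟨fun x => Or.inl (s.iseqv.refl x), ?_, ?_⟩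
    · rintro x y (h | ⟨h1, h2⟩ | ⟨h1, h2⟩)
      · exact Or.inl (sy h)
      · exact Or.inr (Or.inr ⟨sy h2, sy h1⟩)
      · exact Or.inr (Or.inl ⟨sy h2, sy h1⟩)
    · rintro x y z (h | ⟨h1, h2⟩ | ⟨h1, h2⟩) (g | ⟨g1, g2⟩ | ⟨g1, g2⟩)
      · exact Or.inl (tr h g)
      · exact Or.inr (Or.inl ⟨tr h g1, g2⟩)
      · exact Or.inr (Or.inr ⟨tr h g1, g2⟩)
      · exact Or.inr (Or.inl ⟨h1, tr h2 g⟩)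
      · exact Or.inl (tr (tr h1 (sy (tr h2 g1))) g2)
      · exact Or.inl (tr h1 g2)
      · exact Or.inr (Or.inr ⟨h1, tr h2 g⟩)
      · exact Or.inl (tr h1 g2)
      · exact Or.inl (tr (tr h1 (sy (tr h2 g1))) g2)

lemma joinPair_self {s : Setoid α} {a b : α} (hab : s.r a b) (x y : α) :
    (joinPair s a b).r x y ↔ s.r x y := by
  constructor
  · rintro (h | ⟨h1, h2⟩ | ⟨h1, h2⟩)
    · exact h
    · exact s.iseqv.trans (s.iseqv.trans h1 hab) h2
    · exact s.iseqv.trans (s.iseqv.trans h1 (s.iseqv.symm hab)) h2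
  · exact Or.inl

/-- Number of classes of a setoid, as ncard of the set of class-sets. -/
lemma ncard_classes [Finite α] (s : Setoid α) :
    Set.ncard {A : Set α | ∃ a, A = {b | s.r a b}} = Nat.card (Quotient s) := by
  classical
  have hwd : ∀ a a' : α, s.r a a' → {b | s.r a b} = {b | s.r a' b} := by
    intro a a' h; ext b
    exact ⟨fun hb => s.iseqv.trans (s.iseqv.symm h) hb, fun hb => s.iseqv.trans h hb⟩
  set g : Quotient s → Set α := Quotient.lift (fun a => {b | s.r a b}) hwd with hg
  have hinj : Function.Injective g := by
    intro q q'
    induction q using Quotient.ind with | _ a =>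
    induction q' using Quotient.ind with | _ a' =>
    intro h
    have : a' ∈ {b | s.r a b} := by
      rw [show {b | s.r a b} = g (Quotient.mk s a) from rfl, h]
      exact s.iseqv.refl a'
    exact Quotient.sound this
  have hrange : {A : Set α | ∃ a, A = {b | s.r a b}} = Set.range g := by
    ext A; constructor
    · rintro ⟨a, rfl⟩; exact ⟨Quotient.mk s a, rfl⟩
    · rintro ⟨q, rfl⟩
      induction q using Quotient.ind with | _ a =>
      exact ⟨a, rfl⟩
  rw [hrange, ← Nat.card_coe_set_eq]
  exact (Nat.card_congr (Equiv.ofInjective g hinj)).symm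

lemma card_subtype_ne [Finite α] (x : α) :
    Nat.card α = Nat.card {z : α // z ≠ x} + 1 := by
  classical
  have e := (Equiv.sumCompl (fun z : α => z = x)).symm
  rw [Nat.card_congr e, Nat.card_sum]
  have h1 : Nat.card {z : α // z = x} = 1 := by
    have : Unique {z : α // z = x} := ⟨⟨⟨x, rfl⟩⟩, by rintro ⟨z, rfl⟩; rfl⟩
    exact Nat.card_unique
  have h2 : Nat.card {z : α // ¬ z = x} = Nat.card {z : α // z ≠ x} := rfl
  omega

lemma card_lt_of_surj {A B : Type*} [Finite A] (f : A → B) (hf : Function.Surjective f)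
    {x y : A} (hxy : x ≠ y) (hfxy : f x = f y) : Nat.card B + 1 ≤ Nat.card A := by
  have : Finite B := Finite.of_surjective f hf
  have hsurj : Function.Surjective (fun z : {z : A // z ≠ x} => f z.1) := by
    intro b
    obtain ⟨a, rfl⟩ := hf b
    by_cases ha : a = x
    · exact ⟨⟨y, fun h => hxy h.symm⟩, by rw [ha, hfxy]⟩
    · exact ⟨⟨a, ha⟩, rfl⟩
  have h1 := Nat.card_le_card_of_surjective _ hsurj
  have h2 := card_subtype_ne x
  omega

lemma card_quot_le [Finite α] {r s : Setoid α} (h : ∀ x y, r.r x y → s.r x y) :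
    Nat.card (Quotient s) ≤ Nat.card (Quotient r) := by
  refine Nat.card_le_card_of_surjective
    (Quotient.lift (fun a => Quotient.mk s a) (fun a b hab => Quotient.sound (h a b hab))) ?_
  intro q
  induction q using Quotient.ind with | _ a =>
  exact ⟨Quotient.mk r a, rfl⟩

lemma card_quot_lt [Finite α] {r s : Setoid α} (h : ∀ x y, r.r x y → s.r x y)
    {a b : α} (hr : ¬ r.r a b) (hs : s.r a b) :
    Nat.card (Quotient s) + 1 ≤ Nat.card (Quotient r) := by
  refine card_lt_of_surj
    (Quotient.lift (fun a => Quotient.mk s a) (fun a b hab => Quotient.sound (h a b hab)))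
    ?_ (x := Quotient.mk r a) (y := Quotient.mk r b)
    (fun hq => hr (Quotient.exact hq)) (Quotient.sound hs)
  intro q
  induction q using Quotient.ind with | _ a =>
  exact ⟨Quotient.mk r a, rfl⟩

lemma card_quot_joinPair [Finite α] (s : Setoid α) (a b : α) :
    Nat.card (Quotient s) ≤ Nat.card (Quotient (joinPair s a b)) + 1 := by
  classical
  set J := joinPair s a b with hJ
  have hle : ∀ x y, s.r x y → J.r x y := fun x y h => Or.inl h
  set f : Quotient s → Quotient J :=
    Quotient.lift (fun z => Quotient.mk J z) (fun x y h => Quotient.sound (hle x y h)) with hf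
  have hinj : Function.Injective (fun q : {q : Quotient s // q ≠ Quotient.mk s a} => f q.1) := by
    rintro ⟨q1, hq1⟩ ⟨q2, hq2⟩ h
    obtain ⟨x, rfl⟩ := Quotient.exists_rep q1
    obtain ⟨y, rfl⟩ := Quotient.exists_rep q2
    have hxy : J.r x y := Quotient.exact h
    rcases hxy with h' | ⟨h1, h2⟩ | ⟨h1, h2⟩
    · exact Subtype.ext (Quotient.sound h')
    · exact absurd (Quotient.sound h1) hq1
    · exact absurd (Quotient.sound (s.iseqv.symm h2)) hq2
  have h1 := Nat.card_le_card_of_injective _ hinj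
  have h2 := card_subtype_ne (Quotient.mk s a)
  omega

end Aux

section PermAux

open Equiv Equiv.Perm

variable {α : Type*} [Finite α] [DecidableEq α]

lemma pow_mod_apply (f : Equiv.Perm α) (x : α) (s : ℕ) (hs : (f ^ s) x = x) :
    ∀ k, (f ^ k) x = (f ^ (k % s)) x := by
  intro k
  induction k using Nat.strong_induction_on with
  | _ k ih =>
    rcases Nat.lt_or_ge k s with h | h
    · rw [Nat.mod_eq_of_lt h]
    · rcases Nat.eq_zero_or_pos s with rfl | hs0
      · simp [Nat.mod_zero]
      · have h2 : (f ^ (k - s + s)) x = (f ^ (k - s)) x := by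
          rw [pow_add, Equiv.Perm.mul_apply, hs]
        rw [Nat.sub_add_cancel h] at h2
        rw [h2, ih (k - s) (by omega), Nat.mod_eq_sub_mod h]

lemma step_rel (ρ : Equiv.Perm α) (a b z : α) :
    (joinPair (cycSetoid ρ) a b).r z ((Equiv.swap a b * ρ) z) := by
  have hz : ρ.SameCycle z (ρ z) := ⟨1, by simp⟩
  by_cases h1 : ρ z = a
  · refine Or.inr (Or.inl ⟨h1 ▸ hz, ?_⟩)
    show ρ.SameCycle b ((Equiv.swap a b * ρ) z)
    rw [Equiv.Perm.mul_apply, h1, Equiv.swap_apply_left]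
  · by_cases h2 : ρ z = b
    · refine Or.inr (Or.inr ⟨h2 ▸ hz, ?_⟩)
      show ρ.SameCycle a ((Equiv.swap a b * ρ) z)
      rw [Equiv.Perm.mul_apply, h2, Equiv.swap_apply_right]
    · refine Or.inl ?_
      show ρ.SameCycle z ((Equiv.swap a b * ρ) z)
      rw [Equiv.Perm.mul_apply, Equiv.swap_apply_of_ne_of_ne h1 h2]
      exact hz

lemma sameCycle_swap_mul_le (ρ : Equiv.Perm α) (a b : α) {x y : α}
    (h : (Equiv.swap a b * ρ).SameCycle x y) :
    (joinPair (cycSetoid ρ) a b).r x y := by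
  obtain ⟨k, -, hk⟩ := h.exists_pow_eq'
  have claim : ∀ k : ℕ, (joinPair (cycSetoid ρ) a b).r x (((Equiv.swap a b * ρ) ^ k) x) := by
    intro k
    induction k with
    | zero => simpa using (joinPair (cycSetoid ρ) a b).iseqv.refl x
    | succ k ih =>
      have hstep := step_rel ρ a b (((Equiv.swap a b * ρ) ^ k) x)
      have e : ((Equiv.swap a b * ρ) ^ (k + 1)) x
          = (Equiv.swap a b * ρ) (((Equiv.swap a b * ρ) ^ k) x) := by
        rw [pow_succ', Equiv.Perm.mul_apply]
      rw [e]
      exact (joinPair (cycSetoid ρ) a b).iseqv.trans ih hstep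
  rw [← hk]
  exact claim k

lemma sameCycle_le_swap_mul (ρ : Equiv.Perm α) (a b : α) {x y : α}
    (h : ρ.SameCycle x y) :
    (joinPair (cycSetoid (Equiv.swap a b * ρ)) a b).r x y := by
  have e : Equiv.swap a b * (Equiv.swap a b * ρ) = ρ := by
    rw [← mul_assoc, Equiv.swap_mul_self, one_mul]
  exact sameCycle_swap_mul_le (Equiv.swap a b * ρ) a b (by rw [e]; exact h)

lemma sameCycle_swap_mul_of_not (ρ : Equiv.Perm α) {a b : α}
    (hab : a ≠ b) (h : ¬ ρ.SameCycle a b) : (Equiv.swap a b * ρ).SameCycle a b := by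
  have hex : ∃ m, 0 < m ∧ (ρ ^ m) a = a :=
    ⟨orderOf ρ, orderOf_pos ρ, by rw [pow_orderOf_eq_one]; rfl⟩
  obtain ⟨m, ⟨hm0, hm⟩, hmin⟩ :
      ∃ m, (0 < m ∧ (ρ ^ m) a = a) ∧ ∀ j, j < m → ¬ (0 < j ∧ (ρ ^ j) a = a) :=
    ⟨Nat.find hex, Nat.find_spec hex, fun j hj => Nat.find_min hex hj⟩
  obtain ⟨m', rfl⟩ : ∃ m', m = m' + 1 := ⟨m - 1, by omega⟩
  have hnb : ∀ j : ℕ, (ρ ^ j) a ≠ b := by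
    intro j hj
    exact h ⟨(j : ℤ), by rw [zpow_natCast]; exact hj⟩
  have key : ∀ k, k ≤ m' → ((Equiv.swap a b * ρ) ^ k) a = (ρ ^ k) a := by
    intro k
    induction k with
    | zero => intro _; simp
    | succ k ih =>
      intro hk
      have hna : (ρ ^ (k + 1)) a ≠ a := by
        intro hfix
        exact hmin (k + 1) (by omega) ⟨Nat.succ_pos k, hfix⟩
      have e1 : ((Equiv.swap a b * ρ) ^ (k + 1)) a
          = Equiv.swap a b (ρ ((ρ ^ k) a)) := by
        rw [pow_succ', Equiv.Perm.mul_apply, ih (by omega), Equiv.Perm.mul_apply]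
      have e2 : ρ ((ρ ^ k) a) = (ρ ^ (k + 1)) a := by
        rw [pow_succ', Equiv.Perm.mul_apply]
      rw [e1, e2, Equiv.swap_apply_of_ne_of_ne hna (hnb (k + 1))]
  have hfinal : ((Equiv.swap a b * ρ) ^ (m' + 1)) a = b := by
    have e1 : ((Equiv.swap a b * ρ) ^ (m' + 1)) a
        = Equiv.swap a b (ρ ((ρ ^ m') a)) := by
      rw [pow_succ', Equiv.Perm.mul_apply, key m' le_rfl, Equiv.Perm.mul_apply]
    have e2 : ρ ((ρ ^ m') a) = (ρ ^ (m' + 1)) a := by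
      rw [pow_succ', Equiv.Perm.mul_apply]
    rw [e1, e2, hm, Equiv.swap_apply_left]
  exact ⟨((m' + 1 : ℕ) : ℤ), by rw [zpow_natCast]; exact hfinal⟩

lemma not_sameCycle_swap_mul (ρ : Equiv.Perm α) {a b : α}
    (hab : a ≠ b) (h : ρ.SameCycle a b) : ¬ (Equiv.swap a b * ρ).SameCycle a b := by
  obtain ⟨k0, -, hk0⟩ := h.exists_pow_eq'
  have hk00 : 0 < k0 := by
    rcases Nat.eq_zero_or_pos k0 with rfl | h'
    · simp at hk0; exact absurd hk0 hab
    · exact h'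
  have hex : ∃ s, 0 < s ∧ ((ρ ^ s) a = a ∨ (ρ ^ s) a = b) := ⟨k0, hk00, Or.inr hk0⟩
  obtain ⟨s, ⟨hs0, hsor⟩, hmin⟩ :
      ∃ s, (0 < s ∧ ((ρ ^ s) a = a ∨ (ρ ^ s) a = b)) ∧
        ∀ j, j < s → ¬ (0 < j ∧ ((ρ ^ j) a = a ∨ (ρ ^ j) a = b)) :=
    ⟨Nat.find hex, Nat.find_spec hex, fun j hj => Nat.find_min hex hj⟩
  have hsb : (ρ ^ s) a = b := by
    rcases hsor with hfix | hb
    · exfalso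
      have hmod := pow_mod_apply ρ a s hfix k0
      rw [hk0] at hmod
      have hlt : k0 % s < s := Nat.mod_lt _ hs0
      have hne : 0 < k0 % s := by
        rcases Nat.eq_zero_or_pos (k0 % s) with h0 | h'
        · rw [h0] at hmod; simp at hmod; exact absurd hmod.symm hab
        · exact h'
      exact hmin (k0 % s) hlt ⟨hne, Or.inr hmod.symm⟩
    · exact hb
  obtain ⟨s', rfl⟩ : ∃ s', s = s' + 1 := ⟨s - 1, by omega⟩
  have key : ∀ k, k ≤ s' → ((Equiv.swap a b * ρ) ^ k) a = (ρ ^ k) a := by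
    intro k
    induction k with
    | zero => intro _; simp
    | succ k ih =>
      intro hk
      have hna : (ρ ^ (k + 1)) a ≠ a := by
        intro hfix
        exact hmin (k + 1) (by omega) ⟨Nat.succ_pos k, Or.inl hfix⟩
      have hnb : (ρ ^ (k + 1)) a ≠ b := by
        intro hb'
        exact hmin (k + 1) (by omega) ⟨Nat.succ_pos k, Or.inr hb'⟩
      have e1 : ((Equiv.swap a b * ρ) ^ (k + 1)) a
          = Equiv.swap a b (ρ ((ρ ^ k) a)) := by
        rw [pow_succ', Equiv.Perm.mul_apply, ih (by omega), Equiv.Perm.mul_apply]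
      have e2 : ρ ((ρ ^ k) a) = (ρ ^ (k + 1)) a := by
        rw [pow_succ', Equiv.Perm.mul_apply]
      rw [e1, e2, Equiv.swap_apply_of_ne_of_ne hna hnb]
  have hcycle : ((Equiv.swap a b * ρ) ^ (s' + 1)) a = a := by
    have e1 : ((Equiv.swap a b * ρ) ^ (s' + 1)) a
        = Equiv.swap a b (ρ ((ρ ^ s') a)) := by
      rw [pow_succ', Equiv.Perm.mul_apply, key s' le_rfl, Equiv.Perm.mul_apply]
    have e2 : ρ ((ρ ^ s') a) = (ρ ^ (s' + 1)) a := by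
      rw [pow_succ', Equiv.Perm.mul_apply]
    rw [e1, e2, hsb, Equiv.swap_apply_right]
  have hall : ∀ k : ℕ, ((Equiv.swap a b * ρ) ^ k) a ≠ b := by
    intro k
    rw [pow_mod_apply (Equiv.swap a b * ρ) a (s' + 1) hcycle k]
    have hlt : k % (s' + 1) < s' + 1 := Nat.mod_lt _ (Nat.succ_pos s')
    rw [key (k % (s' + 1)) (by omega)]
    rcases Nat.eq_zero_or_pos (k % (s' + 1)) with h0 | hpos
    · rw [h0]; simpa using hab
    · intro hb'
      exact hmin (k % (s' + 1)) hlt ⟨hpos, Or.inr hb'⟩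
  intro hsc
  obtain ⟨i, -, hi⟩ := hsc.exists_pow_eq'
  exact hall i hi

end PermAux

section Count

set_option linter.unusedSectionVars false

open Equiv Equiv.Perm

variable {α : Type*} [Finite α] [DecidableEq α]

noncomputable def cc (ρ : Equiv.Perm α) : ℕ := Nat.card (Quotient (cycSetoid ρ))

noncomputable def jj (τ σ : Equiv.Perm α) : ℕ := Nat.card (Quotient (jointSetoid τ σ))

lemma cc_inv (ρ : Equiv.Perm α) : cc ρ⁻¹ = cc ρ := by
  have h : cycSetoid ρ⁻¹ = cycSetoid ρ :=
    Setoid.ext fun x y => Equiv.Perm.sameCycle_inv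
  rw [cc, cc, h]

lemma cc_split (ρ : Equiv.Perm α) {a b : α} (hab : a ≠ b) (h : ρ.SameCycle a b) :
    cc ρ + 1 ≤ cc (Equiv.swap a b * ρ) := by
  refine card_quot_lt (r := cycSetoid (Equiv.swap a b * ρ)) (s := cycSetoid ρ)
    ?_ (not_sameCycle_swap_mul ρ hab h) h
  intro x y hxy
  exact (joinPair_self (s := cycSetoid ρ) h x y).mp (sameCycle_swap_mul_le ρ a b hxy)

lemma cc_merge (ρ : Equiv.Perm α) {a b : α} (hab : a ≠ b) (h : ¬ ρ.SameCycle a b) :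
    cc (Equiv.swap a b * ρ) + 1 ≤ cc ρ := by
  have htb := sameCycle_swap_mul_of_not ρ hab h
  refine card_quot_lt (r := cycSetoid ρ) (s := cycSetoid (Equiv.swap a b * ρ)) ?_ h htb
  intro x y hxy
  exact (joinPair_self (s := cycSetoid (Equiv.swap a b * ρ)) htb x y).mp
    (sameCycle_le_swap_mul ρ a b hxy)

lemma cc_swap_mul_le' (ρ : Equiv.Perm α) (a b : α) :
    cc (Equiv.swap a b * ρ) ≤ cc ρ + 1 := by
  have h1 : Nat.card (Quotient (joinPair (cycSetoid (Equiv.swap a b * ρ)) a b)) ≤ cc ρ :=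
    card_quot_le (r := cycSetoid ρ) (s := joinPair (cycSetoid (Equiv.swap a b * ρ)) a b)
      (fun x y h => sameCycle_le_swap_mul ρ a b h)
  have h2 : cc (Equiv.swap a b * ρ)
      ≤ Nat.card (Quotient (joinPair (cycSetoid (Equiv.swap a b * ρ)) a b)) + 1 :=
    card_quot_joinPair _ a b
  omega

lemma mem_closure_left (τ σ : Equiv.Perm α) :
    τ ∈ Subgroup.closure ({τ, σ} : Set (Equiv.Perm α)) :=
  Subgroup.subset_closure (Set.mem_insert _ _)

lemma mem_closure_right (τ σ : Equiv.Perm α) :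
    σ ∈ Subgroup.closure ({τ, σ} : Set (Equiv.Perm α)) :=
  Subgroup.subset_closure (Set.mem_insert_of_mem _ rfl)

lemma sameCycle_sameJoint (τ σ : Equiv.Perm α) {x y : α} (h : τ.SameCycle x y) :
    SameJointOrbit τ σ x y := by
  obtain ⟨k, hk⟩ := h
  exact ⟨τ ^ k, zpow_mem (mem_closure_left τ σ) k, hk⟩

lemma rel_apply_left (τ σ : Equiv.Perm α) (x : α) : (jointSetoid τ σ).r x (τ x) :=
  ⟨τ, mem_closure_left τ σ, rfl⟩

lemma rel_apply_right (τ σ : Equiv.Perm α) (x : α) : (jointSetoid τ σ).r x (σ x) :=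
  ⟨σ, mem_closure_right τ σ, rfl⟩

lemma sameJoint_le_of (τ' σ' : Equiv.Perm α) (E : Setoid α)
    (h1 : ∀ x, E.r x (τ' x)) (h2 : ∀ x, E.r x (σ' x)) :
    ∀ x y, SameJointOrbit τ' σ' x y → E.r x y := by
  have main : ∀ g ∈ Subgroup.closure ({τ', σ'} : Set (Equiv.Perm α)), ∀ z, E.r z (g z) := by
    intro g hg
    refine Subgroup.closure_induction ?_ ?_ ?_ ?_ hg
    · intro x hx z
      rcases Set.mem_insert_iff.mp hx with rfl | hx
      · exact h1 z
      · rw [Set.mem_singleton_iff.mp hx]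
        exact h2 z
    · intro z
      simpa using E.iseqv.refl z
    · intro x y hx hy px py z
      rw [Equiv.Perm.mul_apply]
      exact E.iseqv.trans (py z) (px (y z))
    · intro x hx px z
      have h := px (x⁻¹ z)
      rw [show x (x⁻¹ z) = z from x.apply_symm_apply z] at h
      exact E.iseqv.symm h
  rintro x y ⟨g, hg, rfl⟩
  exact main g hg x

lemma jj_self (τ : Equiv.Perm α) : jj τ τ = cc τ := by
  have h : jointSetoid τ τ = cycSetoid τ := by
    refine Setoid.ext fun x y => ?_
    constructor
    · rintro ⟨g, hg, rfl⟩
      rw [show ({τ, τ} : Set (Equiv.Perm α)) = {τ} from by simp] at hg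
      obtain ⟨k, rfl⟩ := Subgroup.mem_closure_singleton.mp hg
      exact ⟨k, rfl⟩
    · rintro ⟨k, hk⟩
      exact ⟨τ ^ k, zpow_mem (mem_closure_left τ τ) k, hk⟩
  rw [jj, cc, h]

lemma cc_one : cc (1 : Equiv.Perm α) = Nat.card α := by
  have hlift : ∀ a b : α, (cycSetoid (1 : Equiv.Perm α)).r a b → a = b := by
    intro a b h
    exact Equiv.Perm.sameCycle_one.mp h
  refine Nat.card_congr (Equiv.ofBijective
    (Quotient.lift (fun a : α => a) hlift) ⟨?_, ?_⟩)
  · intro q q'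
    induction q using Quotient.ind with | _ a =>
    induction q' using Quotient.ind with | _ a' =>
    intro h
    have e : a = a' := h
    rw [e]
  · intro a
    exact ⟨Quotient.mk _ a, rfl⟩

lemma cc_lt_of_ne (ρ : Equiv.Perm α) {a : α} (h : ρ a ≠ a) : cc ρ + 1 ≤ Nat.card α := by
  refine card_lt_of_surj (Quotient.mk (cycSetoid ρ)) (fun q => Quotient.exists_rep q)
    (x := a) (y := ρ a) (Ne.symm h) (Quotient.sound ?_)
  exact ⟨1, by simp⟩

lemma cc_le_card (ρ : Equiv.Perm α) : cc ρ ≤ Nat.card α :=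
  Nat.card_le_card_of_surjective (Quotient.mk (cycSetoid ρ)) (fun q => Quotient.exists_rep q)

end Count

lemma main_aux {n : ℕ} :
    ∀ d : ℕ, ∀ τ σ : Equiv.Perm (Fin n), n - cc (τ⁻¹ * σ) ≤ d →
      cc τ + cc (τ⁻¹ * σ) + cc σ ≤ n + 2 * jj τ σ := by
  have hcard : Nat.card (Fin n) = n := by simp
  intro d
  induction d with
  | zero =>
    intro τ σ hd
    by_cases hfix : ∀ x, (τ⁻¹ * σ) x = x
    · have h1 : τ⁻¹ * σ = 1 := Equiv.ext fun x => by simp [hfix x]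
      have hτσ : τ = σ := inv_mul_eq_one.mp h1
      subst hτσ
      rw [h1, cc_one, jj_self, hcard]
      omega
    · push_neg at hfix
      obtain ⟨a, ha⟩ := hfix
      have := cc_lt_of_ne (τ⁻¹ * σ) ha
      rw [hcard] at this
      omega
  | succ d ih =>
    intro τ σ hd
    by_cases hfix : ∀ x, (τ⁻¹ * σ) x = x
    · have h1 : τ⁻¹ * σ = 1 := Equiv.ext fun x => by simp [hfix x]
      have hτσ : τ = σ := inv_mul_eq_one.mp h1
      subst hτσ
      rw [h1, cc_one, jj_self, hcard]
      omega
    · push_neg at hfix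
      obtain ⟨a, ha⟩ := hfix
      have hccn : cc (τ⁻¹ * σ) + 1 ≤ n := by
        have := cc_lt_of_ne (τ⁻¹ * σ) ha
        rwa [hcard] at this
      obtain ⟨b, hb⟩ : ∃ b, (τ⁻¹ * σ) a = b := ⟨_, rfl⟩
      have hab : a ≠ b := fun h => ha (by rw [hb, ← h])
      have hρab : (τ⁻¹ * σ).SameCycle a b := ⟨1, by simpa using hb⟩
      have hπ : (τ * Equiv.swap a b)⁻¹ * σ = Equiv.swap a b * (τ⁻¹ * σ) := by
        rw [mul_inv_rev, Equiv.swap_inv, mul_assoc]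
      have hsplit : cc (τ⁻¹ * σ) + 1 ≤ cc (Equiv.swap a b * (τ⁻¹ * σ)) := cc_split _ hab hρab
      have hπle : cc (Equiv.swap a b * (τ⁻¹ * σ)) ≤ n := by
        have := cc_le_card (Equiv.swap a b * (τ⁻¹ * σ))
        rwa [hcard] at this
      have IH := ih (τ * Equiv.swap a b) σ (by rw [hπ]; omega)
      rw [hπ] at IH
      have hccτ : cc τ = cc (Equiv.swap a b * (τ * Equiv.swap a b)⁻¹) := by
        have e : Equiv.swap a b * (τ * Equiv.swap a b)⁻¹ = τ⁻¹ := by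
          rw [mul_inv_rev, Equiv.swap_inv, ← mul_assoc, Equiv.swap_mul_self, one_mul]
        rw [e, cc_inv]
      have hEab : (jointSetoid τ σ).r a b :=
        ⟨τ⁻¹ * σ, mul_mem (inv_mem (mem_closure_left τ σ)) (mem_closure_right τ σ), hb⟩
      have hEt : ∀ x, (jointSetoid τ σ).r x (Equiv.swap a b x) := by
        intro x
        by_cases hxa : x = a
        · rw [hxa, Equiv.swap_apply_left]; exact hEab
        · by_cases hxb : x = b
          · rw [hxb, Equiv.swap_apply_right]
            exact (jointSetoid τ σ).iseqv.symm hEab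
          · rw [Equiv.swap_apply_of_ne_of_ne hxa hxb]
      have hle1 : ∀ x y, SameJointOrbit (τ * Equiv.swap a b) σ x y → (jointSetoid τ σ).r x y := by
        refine sameJoint_le_of _ _ _ ?_ (rel_apply_right τ σ)
        intro x
        have h2 := rel_apply_left τ σ (Equiv.swap a b x)
        have e : (τ * Equiv.swap a b) x = τ (Equiv.swap a b x) := rfl
        rw [e]
        exact (jointSetoid τ σ).iseqv.trans (hEt x) h2
      have hjle : jj τ σ ≤ jj (τ * Equiv.swap a b) σ :=
        card_quot_le (r := jointSetoid (τ * Equiv.swap a b) σ) (s := jointSetoid τ σ) hle1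
      by_cases hE' : (jointSetoid (τ * Equiv.swap a b) σ).r a b
      · -- Case A
        have hE't : ∀ x, (jointSetoid (τ * Equiv.swap a b) σ).r x (Equiv.swap a b x) := by
          intro x
          by_cases hxa : x = a
          · rw [hxa, Equiv.swap_apply_left]; exact hE'
          · by_cases hxb : x = b
            · rw [hxb, Equiv.swap_apply_right]
              exact (jointSetoid (τ * Equiv.swap a b) σ).iseqv.symm hE'
            · rw [Equiv.swap_apply_of_ne_of_ne hxa hxb]
        have hle2 : ∀ x y, SameJointOrbit τ σ x y → (jointSetoid (τ * Equiv.swap a b) σ).r x y := by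
          refine sameJoint_le_of _ _ _ ?_ (rel_apply_right _ σ)
          intro x
          have e : τ x = (τ * Equiv.swap a b) (Equiv.swap a b x) := by
            rw [Equiv.Perm.mul_apply, Equiv.swap_apply_self]
          rw [e]
          exact (jointSetoid (τ * Equiv.swap a b) σ).iseqv.trans (hE't x)
            (rel_apply_left (τ * Equiv.swap a b) σ (Equiv.swap a b x))
        have hjge : jj (τ * Equiv.swap a b) σ ≤ jj τ σ :=
          card_quot_le (r := jointSetoid τ σ) (s := jointSetoid (τ * Equiv.swap a b) σ) hle2
        have hccA : cc τ ≤ cc (τ * Equiv.swap a b) + 1 := by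
          rw [hccτ, ← cc_inv (τ * Equiv.swap a b)]
          exact cc_swap_mul_le' _ a b
        omega
      · -- Case B
        have hnc : ¬ (τ * Equiv.swap a b).SameCycle a b := fun h => hE' (sameCycle_sameJoint _ σ h)
        have hncinv : ¬ ((τ * Equiv.swap a b)⁻¹).SameCycle a b := fun h =>
          hnc (Equiv.Perm.sameCycle_inv.mp h)
        have hccB : cc τ + 1 ≤ cc (τ * Equiv.swap a b) := by
          have h := cc_merge ((τ * Equiv.swap a b)⁻¹) hab hncinv
          rw [cc_inv] at h
          omega
        have hleJ : ∀ x y, SameJointOrbit τ σ x y →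
            (joinPair (jointSetoid (τ * Equiv.swap a b) σ) a b).r x y := by
          refine sameJoint_le_of _ _ _ ?_ ?_
          · intro x
            by_cases hxa : x = a
            · have e : τ a = (τ * Equiv.swap a b) b := by
                rw [Equiv.Perm.mul_apply, Equiv.swap_apply_right]
              rw [hxa, e]
              exact Or.inr (Or.inl ⟨(jointSetoid (τ * Equiv.swap a b) σ).iseqv.refl a,
                rel_apply_left (τ * Equiv.swap a b) σ b⟩)
            · by_cases hxb : x = b
              · have e : τ b = (τ * Equiv.swap a b) a := by
                  rw [Equiv.Perm.mul_apply, Equiv.swap_apply_left]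
                rw [hxb, e]
                exact Or.inr (Or.inr ⟨(jointSetoid (τ * Equiv.swap a b) σ).iseqv.refl b,
                  rel_apply_left (τ * Equiv.swap a b) σ a⟩)
              · have e : τ x = (τ * Equiv.swap a b) x := by
                  rw [Equiv.Perm.mul_apply, Equiv.swap_apply_of_ne_of_ne hxa hxb]
                rw [e]
                exact Or.inl (rel_apply_left (τ * Equiv.swap a b) σ x)
          · intro x
            exact Or.inl (rel_apply_right (τ * Equiv.swap a b) σ x)
        have hj1 : Nat.card (Quotient (joinPair (jointSetoid (τ * Equiv.swap a b) σ) a b)) ≤ jj τ σ :=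
          card_quot_le (r := jointSetoid τ σ)
            (s := joinPair (jointSetoid (τ * Equiv.swap a b) σ) a b) hleJ
        have hj2 : jj (τ * Equiv.swap a b) σ
            ≤ Nat.card (Quotient (joinPair (jointSetoid (τ * Equiv.swap a b) σ) a b)) + 1 :=
          card_quot_joinPair _ a b
        omega

/-- Inequality (2.10): `#(τ) + #(τ⁻¹σ) + #(σ) ≤ n + 2·#(τ ∨ σ)` for all `τ, σ ∈ S([n])`. -/
theorem stmt_2 (n : ℕ) (hn : 0 < n) (τ σ : Equiv.Perm (Fin n)) :
    numOrbits τ + numOrbits (τ⁻¹ * σ) + numOrbits σ ≤ n + 2 * numJointOrbits τ σ := by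
  have h1 : numOrbits τ = cc τ := ncard_classes (cycSetoid τ)
  have h2 : numOrbits (τ⁻¹ * σ) = cc (τ⁻¹ * σ) := ncard_classes (cycSetoid (τ⁻¹ * σ))
  have h3 : numOrbits σ = cc σ := ncard_classes (cycSetoid σ)
  have h4 : numJointOrbits τ σ = jj τ σ := ncard_classes (jointSetoid τ σ)
  rw [h1, h2, h3, h4]
  exact main_aux (n - cc (τ⁻¹ * σ)) τ σ le_rfl
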